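/- Let K be a field of characteristic zero, let t₂ ∈ K, and let s₁₁, s₁₂, s₂₁, s₂₂, s₃₁, s₃₂, s₃₃, s₃₄, s₄₁, s₄₂, s₄₃, s₄₄ ∈ K. Set S = [[s₁₁,s₁₂,0,0],[s₂₁,s₂₂,0,0],[s₃₁,s₃₂,s₃₃,s₃₄],[s₄₁,s₄₂,s₄₃,s₄₄]], Ω = [[0,0,0,4/3],[0,0,4,0],[0,-4,0,(4/3)t₂],[-4/3,0,-(4/3)t₂,0]], and Φ = [[0,0,1,0],[0,0,0,1],[-1,0,0,0],[0,-1,0,0]]. Then S·Ω·Sᵀ = Φ holds if and only if both S₁·Ω₂·S₄ᵀ = I₂ and s₄₂s₂₁ − s₄₁s₂₂ + s₃₂s₁₁ − s₃₁s₁₂ = t₂/4, where S₁ = [[s₁₁,s₁₂],[s₂₁,s₂₂]], S₄ = [[s₃₃,s₃₄],[s₄₃,s₄₄]], Ω₂ = [[0,4/3],[4,0]], and I₂ is the 2×2 identity matrix. -/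

import Mathlib

open Matrix
/-- For a `4 × 4` matrix `S` with vanishing upper-right `2 × 2` block, the symplectic
compatibility `S·Ω·Sᵀ = Φ` is equivalent to `S₁·Ω₂·S₄ᵀ = I₂` together with the scalar
relation `s₄₂s₂₁ − s₄₁s₂₂ + s₃₂s₁₁ − s₃₁s₁₂ = t₂/4`. -/
theorem block_symplectic_iff {K : Type*} [Field K] [CharZero K]
    (t2 s11 s12 s21 s22 s31 s32 s33 s34 s41 s42 s43 s44 : K) :
    let S : Matrix (Fin 4) (Fin 4) K :=
      !![s11, s12, 0, 0; s21, s22, 0, 0; s31, s32, s33, s34; s41, s42, s43, s44]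
    let Ω : Matrix (Fin 4) (Fin 4) K :=
      !![0, 0, 0, 4/3; 0, 0, 4, 0; 0, -4, 0, (4/3)*t2; -(4/3), 0, -((4/3)*t2), 0]
    let Φ : Matrix (Fin 4) (Fin 4) K :=
      !![0, 0, 1, 0; 0, 0, 0, 1; -1, 0, 0, 0; 0, -1, 0, 0]
    let S1 : Matrix (Fin 2) (Fin 2) K := !![s11, s12; s21, s22]
    let S4 : Matrix (Fin 2) (Fin 2) K := !![s33, s34; s43, s44]
    let Ω2 : Matrix (Fin 2) (Fin 2) K := !![0, 4/3; 4, 0]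
    (S * Ω * Sᵀ = Φ ↔
      (S1 * Ω2 * S4ᵀ = (1 : Matrix (Fin 2) (Fin 2) K) ∧
        s42 * s21 - s41 * s22 + s32 * s11 - s31 * s12 = t2 / 4)) := by
  intro S Ω Φ S1 S4 Ω2
  rw [← Matrix.ext_iff (M := S * Ω * Sᵀ)]
  rw [show (S1 * Ω2 * S4ᵀ = 1) ↔ ∀ i j, (S1 * Ω2 * S4ᵀ) i j = (1:Matrix (Fin 2) (Fin 2) K) i j from Matrix.ext_iff.symm]
  simp only [S, Ω, Φ, S1, S4, Ω2, Matrix.mul_apply, Matrix.transpose_apply,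
    Fin.sum_univ_four, Fin.sum_univ_two, Fin.forall_fin_succ, Fin.forall_fin_two,
    Matrix.cons_val', Matrix.cons_val_zero, Matrix.cons_val_one, Matrix.head_cons,
    Matrix.head_fin_const, Matrix.empty_val', Matrix.cons_val_fin_one,
    Matrix.one_apply, Fin.isValue, Matrix.vecHead, Matrix.vecTail]
  norm_num
  simp only [Matrix.cons_val]
  norm_num
  set d := s11*s22 - s12*s21 with hdd
  constructor
  · rintro ⟨⟨a1, a2⟩, ⟨a3, a4⟩, ⟨_, _, _, b4⟩, _⟩
    refine ⟨⟨⟨a1, a2⟩, a3, a4⟩, ?_⟩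
    have q14 : (s12*4*s33 + s11*(4/3)*s34) * (s22*4*s43 + s21*(4/3)*s44) = 1 := by
      rw [a1, a4]; ring
    have q23 : (s12*4*s43 + s11*(4/3)*s44) * (s22*4*s33 + s21*(4/3)*s34) = 0 := by
      rw [a2]; ring
    have hd1 : d * (-(16/3)*(s33*s44 - s34*s43)) = 1 := by
      rw [hdd]; linear_combination q14 - q23
    have hd : d ≠ 0 := left_ne_zero_of_mul_eq_one hd1
    have e33 : s33*(4*d) = -s21 := by rw [hdd]; linear_combination -s21*a1 + s11*a3
    have e34 : s34*(4*d) = 3*s22 := by rw [hdd]; linear_combination 3*s22*a1 - 3*s12*a3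
    have e43 : s43*(4*d) = s11 := by rw [hdd]; linear_combination s11*a4 - s21*a2
    have e44 : s44*(4*d) = -3*s12 := by rw [hdd]; linear_combination 3*s22*a2 - 3*s12*a4
    have p1 : (s34*(4*d))*(s43*(4*d)) = 3*s22*s11 := by rw [e34, e43]
    have p2 : (s33*(4*d))*(s44*(4*d)) = -s21*(-3*s12) := by rw [e33, e44]
    have h0 : (s42*s21 - s41*s22 + s32*s11 - s31*s12 - t2/4) * (16*d) = 0 := by
      linear_combination (16*d^2) * b4 + ((16/3)*d*s41) * e34 + (16*d*s42) * e33
        - (16*d*s32) * e43 + ((4/3)*t2) * p1 - ((16/3)*d*s31) * e44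
        - ((4/3)*t2) * p2
    have h16 : (16:K)*d ≠ 0 := mul_ne_zero (by norm_num) hd
    have := (mul_eq_zero.mp h0).resolve_right h16
    linear_combination this
  · rintro ⟨⟨⟨a1, a2⟩, a3, a4⟩, hT⟩
    have q14 : (s12*4*s33 + s11*(4/3)*s34) * (s22*4*s43 + s21*(4/3)*s44) = 1 := by
      rw [a1, a4]; ring
    have q23 : (s12*4*s43 + s11*(4/3)*s44) * (s22*4*s33 + s21*(4/3)*s34) = 0 := by
      rw [a2]; ring
    have hd1 : d * (-(16/3)*(s33*s44 - s34*s43)) = 1 := by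
      rw [hdd]; linear_combination q14 - q23
    have hd : d ≠ 0 := left_ne_zero_of_mul_eq_one hd1
    have e33 : s33*(4*d) = -s21 := by rw [hdd]; linear_combination -s21*a1 + s11*a3
    have e34 : s34*(4*d) = 3*s22 := by rw [hdd]; linear_combination 3*s22*a1 - 3*s12*a3
    have e43 : s43*(4*d) = s11 := by rw [hdd]; linear_combination s11*a4 - s21*a2
    have e44 : s44*(4*d) = -3*s12 := by rw [hdd]; linear_combination 3*s22*a2 - 3*s12*a4
    have h0 : (-(s34*(4/3)*s41) + -(s33*4*s42) + (s32*4 + -(s34*(4/3*t2)))*s43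
        + (s31*(4/3) + s33*(4/3*t2))*s44) * (16*d^2) = 0 := by
      have p1 : (s34*(4*d))*(s43*(4*d)) = 3*s22*s11 := by rw [e34, e43]
      have p2 : (s33*(4*d))*(s44*(4*d)) = -s21*(-3*s12) := by rw [e33, e44]
      linear_combination (-(16/3)*d*s41) * e34 + (-(16:K)*d*s42) * e33 + (16*d*s32) * e43
        + (-(4/3)*t2) * p1 + ((16/3)*d*s31) * e44 + ((4/3)*t2) * p2
        + (16*d) * hT
    have h16 : (16:K)*d^2 ≠ 0 := mul_ne_zero (by norm_num) (pow_ne_zero 2 hd)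
    have hE := (mul_eq_zero.mp h0).resolve_right h16
    refine ⟨⟨a1, a2⟩, ⟨a3, a4⟩, ⟨by linear_combination -a1, by linear_combination -a3, by ring, hE⟩,
      by linear_combination -a2, by linear_combination -a4, by linear_combination -hE, by ring⟩
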